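/- Let r, L ∈ ℕ with r, L ≥ 2, let G be a group and A a finite subset of G which is an asymptotic (r,L)-approximate group. Then the growth function f(n) = |A^n| is bounded above by a polynomial: there exist constants M and d such that f(h) ≤ M·h^d for all h ≥ 1. -/

import Mathlib

open Pointwise

/-- if a finite subset `A` of a group is an asymptotic `(r, L)`-approximate
group (with `r, L ≥ 2`), then its growth function `h ↦ |A^h|` is polynomially bounded. -/
theorem asymptotic_approximate_polynomial_growth {G : Type*} [Group G] [DecidableEq G]
    (r L : ℕ) (hr : 2 ≤ r) (hL : 2 ≤ L) (A : Finset G)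
    (happrox : ∃ h0 : ℕ, ∀ h ≥ h0, ∃ X : Finset G, X.card ≤ L ∧ A ^ (h * r) ⊆ X * A ^ h) :
    ∃ (M : ℝ) (d : ℕ), ∀ h : ℕ, 1 ≤ h → ((A ^ h).card : ℝ) ≤ M * (h : ℝ) ^ d := by
  obtain ⟨h0, hX⟩ := happrox
  rcases A.eq_empty_or_nonempty with hA | hA
  · refine ⟨0, 0, fun h hh => ?_⟩
    subst hA
    rw [Finset.empty_pow (by omega)]
    simp
  set h1 := max h0 1 with hh1
  have h1pos : 1 ≤ h1 := le_max_right _ _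
  have h10 : h0 ≤ h1 := le_max_left _ _
  have mono : Monotone fun n => (A ^ n).card := by
    apply monotone_nat_of_le_succ
    intro n
    obtain ⟨a, ha⟩ := hA
    calc (A ^ n).card = (A ^ n * {a}).card := (Finset.card_mul_singleton _ _).symm
      _ ≤ (A ^ n * A).card := Finset.card_le_card
            (Finset.mul_subset_mul_left (Finset.singleton_subset_iff.2 ha))
      _ = (A ^ (n + 1)).card := by rw [pow_succ]
  have step : ∀ m, h0 ≤ m → (A ^ (m * r)).card ≤ L * (A ^ m).card := by
    intro m hm
    obtain ⟨X, hXc, hXs⟩ := hX m hm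
    calc (A ^ (m * r)).card ≤ (X * A ^ m).card := Finset.card_le_card hXs
      _ ≤ X.card * (A ^ m).card := Finset.card_mul_le
      _ ≤ L * (A ^ m).card := Nat.mul_le_mul_right _ hXc
  have iter : ∀ k, (A ^ (h1 * r ^ k)).card ≤ L ^ k * (A ^ h1).card := by
    intro k
    induction k with
    | zero => simp
    | succ k ih =>
      have he : h1 * r ^ (k + 1) = (h1 * r ^ k) * r := by ring
      have hle : h0 ≤ h1 * r ^ k :=
        le_trans h10 (Nat.le_mul_of_pos_right _ (pow_pos (by omega : 0 < r) k))
      calc (A ^ (h1 * r ^ (k + 1))).card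
          = (A ^ ((h1 * r ^ k) * r)).card := by rw [he]
        _ ≤ L * (A ^ (h1 * r ^ k)).card := step _ hle
        _ ≤ L * (L ^ k * (A ^ h1).card) := Nat.mul_le_mul_left _ ih
        _ = L ^ (k + 1) * (A ^ h1).card := by ring
  refine ⟨(L : ℝ) * (A ^ h1).card, Nat.clog 2 L, fun h hh => ?_⟩
  set d := Nat.clog 2 L with hd
  set k := Nat.clog 2 h with hk
  have hk1 : h ≤ h1 * r ^ k := by
    calc h ≤ 2 ^ k := Nat.le_pow_clog one_lt_two h
      _ ≤ r ^ k := Nat.pow_le_pow_left hr k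
      _ ≤ h1 * r ^ k := Nat.le_mul_of_pos_left _ h1pos
  have hkle : k ≤ Nat.log 2 h + 1 :=
    (Nat.clog_le_iff_le_pow one_lt_two).2 (Nat.lt_pow_succ_log_self one_lt_two h).le
  have hLk : L ^ k ≤ L * h ^ d := by
    calc L ^ k ≤ L ^ (Nat.log 2 h + 1) := Nat.pow_le_pow_right (by omega) hkle
      _ = L * L ^ Nat.log 2 h := by ring
      _ ≤ L * (2 ^ d) ^ Nat.log 2 h :=
          Nat.mul_le_mul_left _ (Nat.pow_le_pow_left (Nat.le_pow_clog one_lt_two L) _)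
      _ = L * (2 ^ Nat.log 2 h) ^ d := by rw [← pow_mul, ← pow_mul, Nat.mul_comm d]
      _ ≤ L * h ^ d := Nat.mul_le_mul_left _
          (Nat.pow_le_pow_left (Nat.pow_log_le_self 2 (by omega)) d)
  have hnat : (A ^ h).card ≤ L * (A ^ h1).card * h ^ d := by
    calc (A ^ h).card ≤ (A ^ (h1 * r ^ k)).card := mono hk1
      _ ≤ L ^ k * (A ^ h1).card := iter k
      _ ≤ (L * h ^ d) * (A ^ h1).card := Nat.mul_le_mul_right _ hLk
      _ = L * (A ^ h1).card * h ^ d := by ring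
  calc ((A ^ h).card : ℝ) ≤ ((L * (A ^ h1).card * h ^ d : ℕ) : ℝ) := by exact_mod_cast hnat
    _ = (L : ℝ) * (A ^ h1).card * (h : ℝ) ^ d := by push_cast; ring
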